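/- Let R be an m×k matrix with i.i.d. Rademacher entries, u > 0, and M the m×m matrix whose columns ((i−1)m/k + 1) through im/k all equal u r_i (r_i = the i-th column of R), i = 1,...,k. Then rank(M) ≤ k, ‖M‖_∞ = u, and for any m×m matrix A of rank at most k₀ < k, ‖M − A‖_F² ≥ (m²u²/k)(k − k₀) σ_min(R/√m)², where σ_min denotes the smallest singular value. -/

import Mathlib

theorem fiber_card' (m k : ℕ) (hm : 0 < m) (hdvd : k ∣ m) (g : Fin m → Fin k)
    (hg : ∀ j, (g j : ℕ) = (j : ℕ) / (m / k)) (a : Fin k) :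
    (Finset.univ.filter (fun j : Fin m => g j = a)).card = m / k := by
  set d := m / k with hd
  have hkd : k * d = m := Nat.mul_div_cancel' hdvd
  have hd0 : 0 < d := by
    rcases Nat.eq_zero_or_pos d with h | h
    · rw [h, mul_zero] at hkd; omega
    · exact h
  have key : ∀ j : Fin m, g j = a ↔ (j : ℕ) / d = (a : ℕ) := by
    intro j
    rw [Fin.ext_iff, hg j]
  rw [← Fintype.card_fin d, ← Finset.card_univ]
  refine Finset.card_bij' (fun j _ => (⟨(j : ℕ) % d, Nat.mod_lt _ hd0⟩ : Fin d))
    (fun t _ => (⟨(a : ℕ) * d + (t : ℕ), by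
      have h1 := a.isLt
      have h2 := t.isLt
      calc (a:ℕ) * d + t < (a+1) * d := by nlinarith
        _ ≤ k * d := Nat.mul_le_mul_right d a.isLt
        _ = m := hkd⟩ : Fin m)) ?_ ?_ ?_ ?_
  · intro j hj; exact Finset.mem_univ _
  · intro t ht
    simp only [Finset.mem_filter, Finset.mem_univ, true_and]
    rw [key]
    show ((a:ℕ) * d + (t:ℕ)) / d = a
    rw [mul_comm, Nat.mul_add_div hd0, Nat.div_eq_of_lt t.isLt, add_zero]
  · intro j hj
    simp only [Finset.mem_filter, Finset.mem_univ, true_and] at hj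
    have hj2 := (key j).1 hj
    apply Fin.ext
    show (a:ℕ) * d + (j:ℕ) % d = j
    have h1 := Nat.div_add_mod (j:ℕ) d
    rw [hj2] at h1
    rw [mul_comm]; exact h1
  · intro t ht
    apply Fin.ext
    show ((a:ℕ) * d + (t:ℕ)) % d = t
    rw [mul_comm, Nat.mul_add_mod, Nat.mod_eq_of_lt t.isLt]

theorem fiber_sum' (m k : ℕ) (g : Fin m → Fin k) (d : ℕ)
    (hcard : ∀ a, (Finset.univ.filter (fun j : Fin m => g j = a)).card = d)
    (F : Fin k → ℝ) : ∑ i, F (g i) = ∑ a, (d:ℝ) * F a := by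
  rw [← Fintype.sum_fiberwise g (fun i => F (g i))]
  refine Finset.sum_congr rfl fun a _ => ?_
  have : ∀ x : {i : Fin m // g i = a}, F (g x.1) = F a := fun x => by rw [x.2]
  rw [Finset.sum_congr rfl (fun x _ => this x), Finset.sum_const, ← hcard a]
  rw [Finset.card_univ, Fintype.card_subtype, nsmul_eq_mul]

theorem main_part (m k k₀ : ℕ) (hk : 0 < k) (hk₀ : k₀ < k) (hm : 0 < m) (hdvd : k ∣ m)
    (u : ℝ) (hu : 0 < u)
    (R : Matrix (Fin m) (Fin k) ℝ)
    (g : Fin m → Fin k) (hg : ∀ j, (g j : ℕ) = (j : ℕ) / (m / k))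
    (M : Matrix (Fin m) (Fin m) ℝ) (hM : ∀ i j, M i j = u * R i (g j))
    (smin : ℝ) (hsminnn : 0 ≤ smin)
    (hsmin : ∀ x : Fin k → ℝ, (∑ j, (x j) ^ 2) = 1 →
      smin ^ 2 ≤ ∑ i, (R.mulVec x i / Real.sqrt m) ^ 2)
    (A : Matrix (Fin m) (Fin m) ℝ) (hA : A.rank ≤ k₀) :
      ((m : ℝ) ^ 2 * u ^ 2 / k) * ((k : ℝ) - k₀) * smin ^ 2
        ≤ ∑ i, ∑ j, (M i j - A i j) ^ 2 := by
  classical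
  set d := m / k with hdd
  have hkd : k * d = m := Nat.mul_div_cancel' hdvd
  have hd0 : 0 < d := by
    rcases Nat.eq_zero_or_pos d with h | h
    · rw [h, mul_zero] at hkd; omega
    · exact h
  have hcard : ∀ a, (Finset.univ.filter (fun j : Fin m => g j = a)).card = d :=
    fiber_card' m k hm hdvd g hg
  have hfib : ∀ F : Fin k → ℝ, ∑ i, F (g i) = ∑ a, (d:ℝ) * F a := fiber_sum' m k g d hcard
  have hk0' : (0:ℝ) < k := by exact_mod_cast hk
  have hm0' : (0:ℝ) < m := by exact_mod_cast hm
  have hkdR : (k:ℝ) * d = m := by exact_mod_cast hkd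
  have hd0' : (0:ℝ) < d := by exact_mod_cast hd0
  set c := Real.sqrt ((k:ℝ)/m) with hc
  have hc2 : c^2 = (k:ℝ)/m := Real.sq_sqrt (by positivity)
  set P : Matrix (Fin m) (Fin k) ℝ := Matrix.of (fun j a => if g j = a then c else 0) with hP
  have hPmul : ∀ x : Fin k → ℝ, P.mulVec x = fun j => c * x (g j) := by
    intro x; funext j
    simp [Matrix.mulVec, dotProduct, hP, ite_mul, Finset.sum_ite_eq]
  set B := A * P with hB
  have hBrank : B.rank ≤ k₀ := le_trans (Matrix.rank_mul_le_left A P) hA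
  let e : EuclideanSpace ℝ (Fin k) ≃ₗ[ℝ] (Fin k → ℝ) := WithLp.linearEquiv 2 ℝ (Fin k → ℝ)
  let f : EuclideanSpace ℝ (Fin k) →ₗ[ℝ] (Fin m → ℝ) := B.mulVecLin.comp e.toLinearMap
  have hrange : LinearMap.range f = LinearMap.range B.mulVecLin :=
    LinearMap.range_comp_of_range_eq_top _ (LinearEquiv.range e)
  have hrankf : Module.finrank ℝ (LinearMap.range f) ≤ k₀ := by
    rw [hrange]; exact hBrank
  have hK : k - k₀ ≤ Module.finrank ℝ (LinearMap.ker f) := by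
    have h1 := LinearMap.finrank_range_add_finrank_ker f
    rw [finrank_euclideanSpace_fin] at h1
    omega
  set K := LinearMap.ker f with hKdef
  set nK := Module.finrank ℝ K with hnK
  let b := stdOrthonormalBasis ℝ K
  let v : Fin nK → EuclideanSpace ℝ (Fin k) := fun t => ((b t : K) : EuclideanSpace ℝ (Fin k))
  have hv : Orthonormal ℝ v := b.orthonormal.comp_linearIsometry K.subtypeₗᵢ
  have hvker : ∀ t, B.mulVec (fun a => v t a) = 0 := by
    intro t
    have h := LinearMap.mem_ker.mp (b t).2
    exact h
  have hvinner : ∀ s t, ∑ j, v s j * v t j = if s = t then (1:ℝ) else 0 := by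
    intro s t
    have h := orthonormal_iff_ite.mp hv s t
    rw [PiLp.inner_apply] at h
    simp only [RCLike.inner_apply, conj_trivial] at h
    rw [← h]
    exact Finset.sum_congr rfl fun j _ => mul_comm _ _
  have hvunit : ∀ t, ∑ j, (v t j)^2 = 1 := by
    intro t
    have h := hvinner t t
    simp only [if_pos rfl] at h
    simpa [sq] using h
  let w : Fin nK → EuclideanSpace ℝ (Fin m) := fun t => WithLp.toLp 2 (fun i => c * v t (g i))
  have hw : Orthonormal ℝ w := by
    rw [orthonormal_iff_ite]
    intro s t
    rw [PiLp.inner_apply]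
    simp only [RCLike.inner_apply, conj_trivial]
    have h1 : ∀ i : Fin m, (w s i) * (w t i) = c^2 * ((fun a => v s a * v t a) (g i)) := by
      intro i; show (c * v s (g i)) * (c * v t (g i)) = _ ; ring
    rw [show ∑ x, w t x * w s x = ∑ x, w s x * w t x from Finset.sum_congr rfl fun x _ => mul_comm _ _]
    rw [Finset.sum_congr rfl (fun i _ => h1 i), ← Finset.mul_sum,
      hfib (fun a => v s a * v t a), ← Finset.mul_sum, hvinner s t, hc2]
    split_ifs
    · field_simp
      linarith [hkdR]
    · ring
  have hAw : ∀ t, A.mulVec (fun i => w t i) = 0 := by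
    intro t
    have h1 : (fun i => w t i) = P.mulVec (fun a => v t a) := by
      rw [hPmul]
    rw [h1, Matrix.mulVec_mulVec, ← hB, hvker t]
  have hMw : ∀ t i, M.mulVec (fun i => w t i) i = u * c * d * R.mulVec (fun a => v t a) i := by
    intro t i
    show ∑ j, M i j * w t j = _
    have h1 : ∀ j : Fin m, M i j * w t j = (u*c) * ((fun a => R i a * v t a) (g j)) := by
      intro j; rw [hM i j]; show u * R i (g j) * (c * v t (g j)) = _; ring
    rw [Finset.sum_congr rfl (fun j _ => h1 j), ← Finset.mul_sum,
      hfib (fun a => R i a * v t a), ← Finset.mul_sum]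
    show u * c * ((d:ℝ) * ∑ a, R i a * v t a) = _
    rw [show R.mulVec (fun a => v t a) i = ∑ a, R i a * v t a from rfl]
    ring
  have hper : ∀ t, (m:ℝ)^2 * u^2 / k * smin^2 ≤ ∑ i, (M.mulVec (fun i => w t i) i)^2 := by
    intro t
    have h1 := hsmin (fun a => v t a) (hvunit t)
    have h2 : ∑ i, (R.mulVec (fun a => v t a) i / Real.sqrt m)^2
        = (∑ i, (R.mulVec (fun a => v t a) i)^2) / m := by
      rw [Finset.sum_div]
      refine Finset.sum_congr rfl fun i _ => ?_
      rw [div_pow, Real.sq_sqrt hm0'.le]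
    rw [h2] at h1
    have h3 : (m:ℝ) * smin^2 ≤ ∑ i, (R.mulVec (fun a => v t a) i)^2 := by
      rw [le_div_iff₀ hm0'] at h1
      linarith
    have h4 : ∑ i, (M.mulVec (fun i => w t i) i)^2
        = (u*c*d)^2 * ∑ i, (R.mulVec (fun a => v t a) i)^2 := by
      rw [Finset.mul_sum]
      refine Finset.sum_congr rfl fun i _ => ?_
      rw [hMw t i]; ring
    rw [h4]
    have h5 : (u*c*d)^2 * ((m:ℝ) * smin^2) ≤ (u*c*d)^2 * ∑ i, (R.mulVec (fun a => v t a) i)^2 :=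
      mul_le_mul_of_nonneg_left h3 (sq_nonneg _)
    refine le_trans (le_of_eq ?_) h5
    have h6 : (u*c*d)^2 = u^2 * ((k:ℝ)/m) * (d:ℝ)^2 := by rw [mul_pow, mul_pow, hc2]
    rw [h6, ← hkdR]
    field_simp
  have hbessel : ∑ t, ∑ i, (M.mulVec (fun i => w t i) i)^2 ≤ ∑ i, ∑ j, (M i j - A i j)^2 := by
    have key : ∀ i : Fin m, ∑ t, (M.mulVec (fun i => w t i) i)^2 ≤ ∑ j, (M i j - A i j)^2 := by
      intro i
      set y : EuclideanSpace ℝ (Fin m) := WithLp.toLp 2 (fun j => M i j - A i j) with hy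
      have hb := hw.sum_inner_products_le (s := Finset.univ) y
      have hinner : ∀ t, (inner ℝ (w t) y : ℝ) = M.mulVec (fun i => w t i) i := by
        intro t
        rw [PiLp.inner_apply]
        simp only [RCLike.inner_apply, conj_trivial]
        have hzero : ∑ j, A i j * w t j = 0 := by
          have := congrFun (hAw t) i
          exact this
        have : ∑ j, w t j * y j = ∑ j, M i j * w t j - ∑ j, A i j * w t j := by
          rw [← Finset.sum_sub_distrib]
          refine Finset.sum_congr rfl fun j _ => ?_
          show w t j * (M i j - A i j) = _
          ring
        rw [show ∑ j, y j * w t j = ∑ j, w t j * y j from Finset.sum_congr rfl fun j _ => mul_comm _ _]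
        rw [this, hzero, sub_zero]
        rfl
      have hnorm : ‖y‖^2 = ∑ j, (M i j - A i j)^2 := by
        rw [← real_inner_self_eq_norm_sq, PiLp.inner_apply]
        simp only [RCLike.inner_apply, conj_trivial]
        exact Finset.sum_congr rfl fun j _ => by rw [sq]
      calc ∑ t, (M.mulVec (fun i => w t i) i)^2
          = ∑ t, ‖(inner ℝ (w t) y : ℝ)‖^2 := by
            refine Finset.sum_congr rfl fun t _ => ?_
            rw [hinner t, Real.norm_eq_abs, sq_abs]
        _ ≤ ‖y‖^2 := hb
        _ = ∑ j, (M i j - A i j)^2 := hnorm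
    calc ∑ t, ∑ i, (M.mulVec (fun i => w t i) i)^2
        = ∑ i, ∑ t, (M.mulVec (fun i => w t i) i)^2 := Finset.sum_comm
      _ ≤ ∑ i, ∑ j, (M i j - A i j)^2 := Finset.sum_le_sum fun i _ => key i
  have hsum : (nK : ℝ) * ((m:ℝ)^2 * u^2 / k * smin^2) ≤ ∑ t, ∑ i, (M.mulVec (fun i => w t i) i)^2 := by
    calc (nK : ℝ) * ((m:ℝ)^2 * u^2 / k * smin^2)
        = ∑ _t : Fin nK, (m:ℝ)^2 * u^2 / k * smin^2 := by
          rw [Finset.sum_const, Finset.card_univ, Fintype.card_fin, nsmul_eq_mul]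
      _ ≤ _ := Finset.sum_le_sum fun t _ => hper t
  have hcast : ((k:ℝ) - k₀) ≤ (nK : ℝ) := by
    have : ((k - k₀ : ℕ) : ℝ) ≤ (nK : ℝ) := by exact_mod_cast hK
    rw [Nat.cast_sub hk₀.le] at this
    exact this
  have hC : (0:ℝ) ≤ (m:ℝ)^2 * u^2 / k * smin^2 := by positivity
  calc ((m : ℝ) ^ 2 * u ^ 2 / k) * ((k : ℝ) - k₀) * smin ^ 2
      = ((k:ℝ) - k₀) * ((m:ℝ)^2 * u^2 / k * smin^2) := by ring
    _ ≤ (nK : ℝ) * ((m:ℝ)^2 * u^2 / k * smin^2) := mul_le_mul_of_nonneg_right hcast hC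
    _ ≤ ∑ t, ∑ i, (M.mulVec (fun i => w t i) i)^2 := hsum
    _ ≤ ∑ i, ∑ j, (M i j - A i j)^2 := hbessel


/-- Properties of the block Rademacher prior matrix: rank at most `k`,
entries of modulus `u`, and a Frobenius-distance lower bound to rank-`k₀`
matrices in terms of the smallest singular value of `R/√m`. -/
theorem stmt_18
    (m k k₀ : ℕ) (hk : 0 < k) (hk₀ : k₀ < k) (hm : 0 < m) (hdvd : k ∣ m)
    (u : ℝ) (hu : 0 < u)
    (R : Matrix (Fin m) (Fin k) ℝ) (hR : ∀ i j, R i j = 1 ∨ R i j = -1)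
    (g : Fin m → Fin k) (hg : ∀ j, (g j : ℕ) = (j : ℕ) / (m / k))
    (M : Matrix (Fin m) (Fin m) ℝ) (hM : ∀ i j, M i j = u * R i (g j))
    (smin : ℝ) (hsminnn : 0 ≤ smin)
    (hsmin : ∀ x : Fin k → ℝ, (∑ j, (x j) ^ 2) = 1 →
      smin ^ 2 ≤ ∑ i, (R.mulVec x i / Real.sqrt m) ^ 2) :
    M.rank ≤ k ∧ (∀ i j, |M i j| = u) ∧
    (∀ A : Matrix (Fin m) (Fin m) ℝ, A.rank ≤ k₀ →
      ((m : ℝ) ^ 2 * u ^ 2 / k) * ((k : ℝ) - k₀) * smin ^ 2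
        ≤ ∑ i, ∑ j, (M i j - A i j) ^ 2) := by
  refine ⟨?_, ?_, ?_⟩
  · have hfac : M = (u • R) * (Matrix.of fun a j => if g j = a then (1:ℝ) else 0) := by
      ext i j
      simp only [Matrix.mul_apply, Matrix.smul_apply, Matrix.of_apply, smul_eq_mul,
        mul_ite, mul_one, mul_zero, Finset.sum_ite_eq', Finset.sum_ite_eq, Finset.mem_univ,
        if_true]
      exact hM i j
    rw [hfac]
    calc ((u • R) * _).rank ≤ (u • R).rank := Matrix.rank_mul_le_left _ _
      _ ≤ k := by simpa using Matrix.rank_le_card_width (u • R)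
  · intro i j
    rw [hM i j]
    rcases hR i (g j) with h | h <;> rw [h] <;> simp [abs_of_pos hu, abs_of_nonneg hu.le]
  · intro A hA
    exact main_part m k k₀ hk hk₀ hm hdvd u hu R g hg M hM smin hsminnn hsmin A hA
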